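/- Let R be a commutative ring. For every Kronecker representation (M_t, M_h; μ_a, μ_b) over R, the sequence 0 → (M_t', 0; 0, 0) → (M_t, M_h; μ_a, μ_b) → (M_t/M_t', M_h; μ̄_a, μ̄_b) → 0, where M_t' = ker(μ_a) ∩ ker(μ_b), is split for every such representation if and only if R is semisimple. -/

import Mathlib

universe u

/-- for every Kronecker representation over `R`, the canonical sequence
`0 → (K, 0; 0, 0) → (M_t, M_h; μ_a, μ_b) → (M_t/K, M_h; μ̄_a, μ̄_b) → 0` with
`K = ker μ_a ⊓ ker μ_b` splits (i.e. the inclusion `(ι_t, 0)` has a retraction, which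
amounts to a linear retraction of `K ↪ M_t`) if and only if `R` is semisimple. -/
theorem stmt11 (R : Type u) [CommRing R] :
    (∀ (Mt Mh : Type u) [AddCommGroup Mt] [Module R Mt] [AddCommGroup Mh] [Module R Mh]
      (μa μb : Mt →ₗ[R] Mh),
        ∃ ρ : Mt →ₗ[R] ↥(LinearMap.ker μa ⊓ LinearMap.ker μb),
          ∀ y : ↥(LinearMap.ker μa ⊓ LinearMap.ker μb), ρ (y : Mt) = y) ↔
    IsSemisimpleRing R := by
  constructor
  · intro h
    refine (isSemisimpleModule_iff R R).mpr ⟨?_⟩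
    intro I
    obtain ⟨ρ, hρ⟩ := h R (R ⧸ I) I.mkQ I.mkQ
    have hK : LinearMap.ker I.mkQ ⊓ LinearMap.ker I.mkQ = I := by
      simp [Submodule.ker_mkQ]
    rw [← hK]
    exact ⟨LinearMap.ker ρ, LinearMap.isCompl_of_proj hρ⟩
  · intro h Mt Mh _ _ _ _ μa μb
    have : IsSemisimpleModule R Mt := inferInstance
    obtain ⟨q, hq⟩ := exists_isCompl (LinearMap.ker μa ⊓ LinearMap.ker μb)
    exact ⟨Submodule.linearProjOfIsCompl _ q hq,
      fun y => Submodule.linearProjOfIsCompl_apply_left hq y⟩
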